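/- Let F be a linear code in F_2^24 with |F| = 2^12 containing a subset C of size 2576 such that the Hamming distance between any two distinct elements of C is at least 8. Then F has minimum distance at least 8, i.e., every nonzero word of F has weight at least 8. -/

import Mathlib

/-- Let `F` be a linear code in `F_2^24` with `|F| = 2^12` containing a subset `C` of
size 2576 with pairwise distances at least 8. Then every nonzero word of `F` has
weight at least 8. -/
theorem min_weight_of_large_code (F : Submodule (ZMod 2) (Fin 24 → ZMod 2))
    (hF : Nat.card F = 2 ^ 12) (C : Finset (Fin 24 → ZMod 2))
    (hCF : ↑C ⊆ (F : Set (Fin 24 → ZMod 2))) (hcard : C.card = 2576)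
    (hdist : ∀ x ∈ C, ∀ y ∈ C, x ≠ y → 8 ≤ hammingDist x y) :
    ∀ u ∈ F, u ≠ 0 → 8 ≤ hammingNorm u := by
  intro u hu hu0
  classical
  set C' : Finset (Fin 24 → ZMod 2) := C.image (fun y => u + y) with hC'
  have hC'card : C'.card = 2576 := by
    rw [hC', Finset.card_image_of_injective _ (add_right_injective u), hcard]
  have hC'F : ↑C' ⊆ (F : Set (Fin 24 → ZMod 2)) := by
    intro z hz
    simp only [hC', Finset.coe_image, Set.mem_image, Finset.mem_coe] at hz
    obtain ⟨y, hy, rfl⟩ := hz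
    exact F.add_mem hu (hCF hy)
  have hSfin : (F : Set (Fin 24 → ZMod 2)).Finite := Set.toFinite _
  have hScard : hSfin.toFinset.card = 4096 := by
    rw [Set.Finite.card_toFinset]
    have := hF
    rw [Nat.card_eq_fintype_card] at this
    simpa [Set.toFinset_card] using this
  have hinter : (C ∩ C').Nonempty := by
    by_contra h
    rw [Finset.not_nonempty_iff_eq_empty] at h
    have hdisj : Disjoint C C' := Finset.disjoint_iff_inter_eq_empty.mpr h
    have hsub : C ∪ C' ⊆ hSfin.toFinset := by
      intro z hz
      rw [Set.Finite.mem_toFinset]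
      rcases Finset.mem_union.mp hz with h1 | h1
      · exact hCF h1
      · exact hC'F h1
    have := Finset.card_le_card hsub
    rw [Finset.card_union_of_disjoint hdisj, hcard, hC'card, hScard] at this
    omega
  obtain ⟨x, hx⟩ := hinter
  rw [Finset.mem_inter] at hx
  obtain ⟨hxC, hxC'⟩ := hx
  simp only [hC', Finset.mem_image] at hxC'
  obtain ⟨y, hyC, hxy⟩ := hxC'
  have hne : x ≠ y := by
    rintro rfl
    apply hu0
    have : u + x = x := hxy
    simpa using this
  have hu_eq : u = x - y := by
    have : x - y = u + y - y := by rw [hxy]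
    simp at this
    exact this.symm
  calc 8 ≤ hammingDist x y := hdist x hxC y hyC hne
    _ = hammingNorm u := by rw [hammingDist_comm, hammingDist_eq_hammingNorm, neg_add_eq_sub, ← hu_eq]
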